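/- (Theorem 2.1: discrete variational energy dissipation law) Let M ∈ ℕ, h > 0, ε > 0, and let D ∈ ℝ^{M×M} be symmetric and negative semi-definite. Suppose vectors u^0, …, u^N ∈ ℝ^M and v^{1/2}, …, v^{N−1/2} ∈ ℝ^M satisfy, componentwise for every 1 ≤ n ≤ N and every index i: u_i^n − u_i^{n−1} = ∑_{k=1}^{n} a_{n−k}^{(n)} v_i^{k−1/2} and v_i^{n−1/2} = ε² ( D·(u^n + u^{n−1})/2 )_i − H( u_i^n, u_i^{n−1} ). Define the discrete energy E^n := h² ∑_{i=1}^{M} F(u_i^n) − (ε²/2) h² (u^n)ᵀ D u^n and the variational energy E_α^n := E^n + (h²/2) ∑_{i=1}^{M} ∑_{k=1}^{n} q_{n−k}^{(n)} ( v_i^{k−1/2} )². Then for every 1 ≤ n ≤ N, E_α^n + (h²/2) ( ∫_{t_{n−1}}^{t_n} ω_α(s) ds ) ∑_{i=1}^{M} ( v_i^{n−1/2} )² ≤ E_α^{n−1}. -/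

import Mathlib

open Finset intervalIntegral Matrix

noncomputable def omegaK (μ s : ℝ) : ℝ := s ^ (μ - 1) / Real.Gamma μ

noncomputable def qK (α : ℝ) (t : ℕ → ℝ) (n k : ℕ) : ℝ :=
  ∫ s in (t (k - 1))..(t k), omegaK α (t n - s)

noncomputable def aK (α : ℝ) (t : ℕ → ℝ) (n k : ℕ) : ℝ :=
  if k = n then qK α t n n else qK α t n k - qK α t (n - 1) k

noncomputable def thetaAux (A : ℕ → ℕ → ℝ) (n : ℕ) : ℕ → ℕ → ℝ
  | 0, m => if m = 0 then 1 / A n n else 0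
  | M + 1, m =>
      if m ≤ M then thetaAux A n M m
      else -(1 / A (n - (M + 1)) (n - (M + 1))) *
        ∑ ℓ ∈ Finset.range (M + 1), thetaAux A n M ℓ * A (n - ℓ) (n - (M + 1))

noncomputable def thetaK (α : ℝ) (t : ℕ → ℝ) (n k : ℕ) : ℝ :=
  thetaAux (aK α t) n (n - k) (n - k)

noncomputable def Hfun (a b : ℝ) : ℝ := a ^ 3 / 3 + a * b ^ 2 / 2 + b ^ 3 / 6 - (a + b) / 2

noncomputable def Ffun (u : ℝ) : ℝ := (1 - u ^ 2) ^ 2 / 4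

noncomputable def zetaK (α : ℝ) (t : ℕ → ℝ) (n j : ℕ) : ℝ :=
  if j = n then thetaK α t n n else thetaK α t n j - thetaK α t n (j + 1)


lemma telescope_Icc (G : ℕ → ℝ) (n : ℕ) :
    ∑ k ∈ Finset.Icc 1 n, (G (k - 1) - G k) = G 0 - G n := by
  induction n with
  | zero => simp
  | succ m ih =>
    rw [Finset.sum_Icc_succ_top (by omega), ih]
    simp only [Nat.add_sub_cancel]
    ring

lemma qK_eval (α : ℝ) (hα0 : 0 < α) (t : ℕ → ℝ) (n k : ℕ) :
    qK α t n k = ((t n - t (k - 1)) ^ α - (t n - t k) ^ α) / (α * Real.Gamma α) := by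
  unfold qK omegaK
  rw [intervalIntegral.integral_div]
  rw [intervalIntegral.integral_comp_sub_left (fun s => s ^ (α - 1)) (t n)]
  rw [integral_rpow (Or.inl (by linarith : (-1:ℝ) < α - 1))]
  rw [show α - 1 + 1 = α by ring, div_div]

lemma omega_integral (α : ℝ) (hα0 : 0 < α) (a b : ℝ) :
    (∫ s in a..b, omegaK α s) = (b ^ α - a ^ α) / (α * Real.Gamma α) := by
  unfold omegaK
  rw [intervalIntegral.integral_div]
  rw [integral_rpow (Or.inl (by linarith : (-1:ℝ) < α - 1))]
  rw [show α - 1 + 1 = α by ring, div_div]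

lemma qsum_eval (α : ℝ) (hα0 : 0 < α) (t : ℕ → ℝ) (ht0 : t 0 = 0) (n : ℕ) :
    ∑ k ∈ Finset.Icc 1 n, qK α t n k = (t n) ^ α / (α * Real.Gamma α) := by
  have hG : ∑ k ∈ Finset.Icc 1 n, qK α t n k
      = ∑ k ∈ Finset.Icc 1 n,
          ((fun j => (t n - t j) ^ α / (α * Real.Gamma α)) (k - 1)
            - (fun j => (t n - t j) ^ α / (α * Real.Gamma α)) k) :=
    Finset.sum_congr rfl fun k _ => by rw [qK_eval α hα0, sub_div]
  rw [hG, telescope_Icc (fun j => (t n - t j) ^ α / (α * Real.Gamma α)) n]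
  simp [ht0, Real.zero_rpow hα0.ne']

lemma rpow_diff_anti (α : ℝ) (hα0 : 0 < α) (hα1 : α < 1)
    {x y c : ℝ} (hx : 0 ≤ x) (hxy : x ≤ y) (hc : 0 ≤ c) :
    (y + c) ^ α + x ^ α ≤ (x + c) ^ α + y ^ α := by
  rcases eq_or_lt_of_le (show x ≤ y + c by linarith) with hE | hlt
  · have hy : y = x := le_antisymm (by linarith) hxy
    have hc0 : c = 0 := by linarith
    subst hy hc0; simp
  · set s := y + c - x with hs
    have hspos : 0 < s := by simp only [hs]; linarith
    have cc := (Real.strictConcaveOn_rpow hα0 hα1).concaveOn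
    have hmx : x ∈ Set.Ici (0:ℝ) := Set.mem_Ici.mpr hx
    have hmy : (y + c) ∈ Set.Ici (0:ℝ) := Set.mem_Ici.mpr (by linarith)
    have hl1 : (0:ℝ) ≤ (y - x) / s := div_nonneg (by linarith) hspos.le
    have hl2 : (0:ℝ) ≤ c / s := div_nonneg hc hspos.le
    have hsum1 : (y - x) / s + c / s = 1 := by field_simp [hs]; ring
    have hsum2 : c / s + (y - x) / s = 1 := by rw [add_comm]; exact hsum1
    have H1 := cc.2 hmx hmy hl1 hl2 hsum1
    have H2 := cc.2 hmx hmy hl2 hl1 hsum2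
    simp only [smul_eq_mul] at H1 H2
    have e1 : (y - x) / s * x + c / s * (y + c) = x + c := by field_simp [hs]; ring
    have e2 : c / s * x + (y - x) / s * (y + c) = y := by field_simp [hs]; ring
    rw [e1] at H1
    rw [e2] at H2
    have key : (y - x) / s * x ^ α + c / s * (y + c) ^ α
        + (c / s * x ^ α + (y - x) / s * (y + c) ^ α) = x ^ α + (y + c) ^ α := by
      linear_combination (x ^ α + (y + c) ^ α) * hsum1
    linarith

lemma kernel_identity (q q' a w : ℕ → ℝ) (n : ℕ) (hn : 1 ≤ n)
    (ha : ∀ k ∈ Finset.Icc 1 (n - 1), a k = q k - q' k) (han : a n = q n) :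
    2 * (w n * ∑ k ∈ Finset.Icc 1 n, a k * w k)
      - ((∑ k ∈ Finset.Icc 1 n, q k * w k ^ 2)
          - (∑ k ∈ Finset.Icc 1 (n - 1), q' k * w k ^ 2)
          + ((∑ k ∈ Finset.Icc 1 n, q k) - ∑ k ∈ Finset.Icc 1 (n - 1), q' k) * w n ^ 2)
    = ∑ k ∈ Finset.Icc 1 (n - 1), (q' k - q k) * (w n - w k) ^ 2 := by
  obtain ⟨m, rfl⟩ : ∃ m, n = m + 1 := ⟨n - 1, by omega⟩
  simp only [Nat.add_sub_cancel] at ha ⊢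
  rw [Finset.sum_Icc_succ_top (by omega : 1 ≤ m + 1) (fun k => a k * w k),
      Finset.sum_Icc_succ_top (by omega : 1 ≤ m + 1) (fun k => q k * w k ^ 2),
      Finset.sum_Icc_succ_top (by omega : 1 ≤ m + 1) q, han]
  have h1 : ∑ k ∈ Finset.Icc 1 m, a k * w k
      = ∑ k ∈ Finset.Icc 1 m, (q k * w k - q' k * w k) :=
    Finset.sum_congr rfl fun k hk => by rw [ha k hk]; ring
  have h2 : ∑ k ∈ Finset.Icc 1 m, (q' k - q k) * (w (m + 1) - w k) ^ 2
      = ∑ k ∈ Finset.Icc 1 m, (w (m + 1) ^ 2 * q' k - w (m + 1) ^ 2 * q k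
          - (2 * w (m + 1)) * (q' k * w k) + (2 * w (m + 1)) * (q k * w k)
          + (q' k * w k ^ 2 - q k * w k ^ 2)) :=
    Finset.sum_congr rfl fun k _ => by ring
  rw [h1, h2]
  simp only [Finset.sum_sub_distrib, Finset.sum_add_distrib, ← Finset.mul_sum]
  ring

theorem stmt17 (α : ℝ) (hα0 : 0 < α) (hα1 : α < 1)
    (N : ℕ) (t : ℕ → ℝ) (ht0 : t 0 = 0) (ht : ∀ k, k < N → t k < t (k + 1))
    (M : ℕ) (h ε : ℝ) (hh : 0 < h) (hε : 0 < ε)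
    (D : Matrix (Fin M) (Fin M) ℝ) (hDsym : D.IsSymm)
    (hDneg : ∀ w : Fin M → ℝ, w ⬝ᵥ D.mulVec w ≤ 0)
    (u v : ℕ → Fin M → ℝ)
    (hscheme1 : ∀ n, 1 ≤ n → n ≤ N → ∀ i,
      u n i - u (n - 1) i = ∑ k ∈ Finset.Icc 1 n, aK α t n k * v k i)
    (hscheme2 : ∀ n, 1 ≤ n → n ≤ N → ∀ i,
      v n i = ε ^ 2 * D.mulVec (fun j => (u n j + u (n - 1) j) / 2) i
        - Hfun (u n i) (u (n - 1) i)) :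
    ∀ n, 1 ≤ n → n ≤ N →
      (h ^ 2 * ∑ i, Ffun (u n i) - ε ^ 2 / 2 * h ^ 2 * (u n ⬝ᵥ D.mulVec (u n))
          + h ^ 2 / 2 * ∑ i, ∑ k ∈ Finset.Icc 1 n, qK α t n k * (v k i) ^ 2)
        + h ^ 2 / 2 * (∫ s in (t (n - 1))..(t n), omegaK α s) * ∑ i, (v n i) ^ 2
      ≤ h ^ 2 * ∑ i, Ffun (u (n - 1) i)
          - ε ^ 2 / 2 * h ^ 2 * (u (n - 1) ⬝ᵥ D.mulVec (u (n - 1)))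
          + h ^ 2 / 2 * ∑ i, ∑ k ∈ Finset.Icc 1 (n - 1), qK α t (n - 1) k * (v k i) ^ 2 := by
  intro n hn1 hnN
  have hΓ : 0 < Real.Gamma α := Real.Gamma_pos_of_pos hα0
  have hden : 0 < α * Real.Gamma α := mul_pos hα0 hΓ
  -- monotonicity of t
  have tmono : ∀ {i j : ℕ}, i ≤ j → j ≤ N → t i ≤ t j := by
    intro i j hij hjN
    induction j with
    | zero =>
      have : i = 0 := by omega
      subst this; exact le_refl _
    | succ m ih =>
      rcases Nat.eq_or_lt_of_le hij with rfl | hlt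
      · exact le_refl _
      · exact le_trans (ih (Nat.lt_succ_iff.mp hlt) (by omega))
          (le_of_lt (ht m (by omega)))
  -- antitonicity of the kernels
  have hq_anti : ∀ k, 1 ≤ k → k ≤ n - 1 → qK α t n k ≤ qK α t (n - 1) k := by
    intro k hk1 hk2
    rw [qK_eval α hα0, qK_eval α hα0]
    have hx : (0:ℝ) ≤ t (n - 1) - t k := sub_nonneg.mpr (tmono hk2 (by omega))
    have hxy : t (n - 1) - t k ≤ t n - t k := by
      have : t (n - 1) ≤ t n := tmono (by omega) hnN
      linarith
    have hc : (0:ℝ) ≤ t k - t (k - 1) := sub_nonneg.mpr (tmono (by omega) (by omega))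
    have key := rpow_diff_anti α hα0 hα1 hx hxy hc
    rw [show t n - t k + (t k - t (k - 1)) = t n - t (k - 1) by ring,
        show t (n - 1) - t k + (t k - t (k - 1)) = t (n - 1) - t (k - 1) by ring] at key
    exact (div_le_div_iff_of_pos_right hden).mpr (by linarith)
  -- integral identity
  have hI : (∫ s in (t (n - 1))..(t n), omegaK α s)
      = (∑ k ∈ Finset.Icc 1 n, qK α t n k) - ∑ k ∈ Finset.Icc 1 (n - 1), qK α t (n - 1) k := by
    rw [omega_integral α hα0, qsum_eval α hα0 t ht0, qsum_eval α hα0 t ht0, sub_div]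
  -- per-component kernel inequality
  have kern : ∀ i, (∑ k ∈ Finset.Icc 1 n, qK α t n k * (v k i) ^ 2)
      + (∫ s in (t (n - 1))..(t n), omegaK α s) * (v n i) ^ 2
      ≤ (∑ k ∈ Finset.Icc 1 (n - 1), qK α t (n - 1) k * (v k i) ^ 2)
        + 2 * ((u n i - u (n - 1) i) * v n i) := by
    intro i
    rw [hI, hscheme1 n hn1 hnN i]
    have key := kernel_identity (fun k => qK α t n k) (fun k => qK α t (n - 1) k)
      (fun k => aK α t n k) (fun k => v k i) n hn1
      (fun k hk => by
        have hk' := Finset.mem_Icc.mp hk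
        simp only [aK]
        rw [if_neg (show ¬ k = n by omega)])
      (by simp [aK])
    have pos : 0 ≤ ∑ k ∈ Finset.Icc 1 (n - 1),
        (qK α t (n - 1) k - qK α t n k) * (v n i - v k i) ^ 2 :=
      Finset.sum_nonneg fun k hk => by
        have hk' := Finset.mem_Icc.mp hk
        exact mul_nonneg (sub_nonneg.mpr (hq_anti k hk'.1 hk'.2)) (sq_nonneg _)
    linarith
  -- potential inequality
  have hF : ∀ i, Ffun (u n i) ≤ Ffun (u (n - 1) i)
      + (u n i - u (n - 1) i) * Hfun (u n i) (u (n - 1) i) := by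
    intro i
    have hid : (u n i - u (n - 1) i) * Hfun (u n i) (u (n - 1) i)
        - (Ffun (u n i) - Ffun (u (n - 1) i)) = (u n i - u (n - 1) i) ^ 4 / 12 := by
      unfold Hfun Ffun; ring
    have hpos : (0:ℝ) ≤ (u n i - u (n - 1) i) ^ 4 / 12 := by positivity
    linarith
  -- matrix symmetry
  have hsymm : ∀ x y : Fin M → ℝ,
      (∑ i, x i * D.mulVec y i) = ∑ i, y i * D.mulVec x i := by
    intro x y
    show x ⬝ᵥ D.mulVec y = y ⬝ᵥ D.mulVec x
    rw [Matrix.dotProduct_mulVec x D y]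
    nth_rewrite 1 [← hDsym.eq]
    rw [Matrix.vecMul_transpose, dotProduct_comm]
  -- matrix energy identity
  have hDm : u n ⬝ᵥ D.mulVec (u n) - u (n - 1) ⬝ᵥ D.mulVec (u (n - 1))
      = 2 * ∑ i, (u n i - u (n - 1) i)
          * D.mulVec (fun j => (u n j + u (n - 1) j) / 2) i := by
    have hm : ∀ i, D.mulVec (fun j => (u n j + u (n - 1) j) / 2) i
        = (D.mulVec (u n) i + D.mulVec (u (n - 1)) i) / 2 := by
      intro i
      simp only [Matrix.mulVec, dotProduct]
      rw [← Finset.sum_add_distrib, Finset.sum_div]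
      exact Finset.sum_congr rfl fun j _ => by ring
    have hexp : ∀ i, (u n i - u (n - 1) i)
        * D.mulVec (fun j => (u n j + u (n - 1) j) / 2) i
        = (u n i * D.mulVec (u n) i + u n i * D.mulVec (u (n - 1)) i
            - u (n - 1) i * D.mulVec (u n) i - u (n - 1) i * D.mulVec (u (n - 1)) i) / 2 :=
      fun i => by rw [hm i]; ring
    rw [show (u n ⬝ᵥ D.mulVec (u n)) = ∑ i, u n i * D.mulVec (u n) i from rfl,
        show (u (n - 1) ⬝ᵥ D.mulVec (u (n - 1)))
          = ∑ i, u (n - 1) i * D.mulVec (u (n - 1)) i from rfl,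
        Finset.sum_congr rfl fun i _ => hexp i]
    simp only [← Finset.sum_div, Finset.sum_sub_distrib, Finset.sum_add_distrib]
    rw [hsymm (u n) (u (n - 1))]
    ring
  -- scheme2 summed
  have S3 : ∑ i, (u n i - u (n - 1) i) * Hfun (u n i) (u (n - 1) i)
      = ε ^ 2 * (∑ i, (u n i - u (n - 1) i)
          * D.mulVec (fun j => (u n j + u (n - 1) j) / 2) i)
        - ∑ i, (u n i - u (n - 1) i) * v n i := by
    rw [Finset.mul_sum, ← Finset.sum_sub_distrib]
    refine Finset.sum_congr rfl fun i _ => ?_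
    have h2 := hscheme2 n hn1 hnN i
    rw [show Hfun (u n i) (u (n - 1) i)
      = ε ^ 2 * D.mulVec (fun j => (u n j + u (n - 1) j) / 2) i - v n i by linarith]
    ring
  -- summed F inequality
  have S1 : ∑ i, Ffun (u n i) ≤ ∑ i, Ffun (u (n - 1) i)
      + ∑ i, (u n i - u (n - 1) i) * Hfun (u n i) (u (n - 1) i) := by
    rw [← Finset.sum_add_distrib]
    exact Finset.sum_le_sum fun i _ => hF i
  -- summed kernel inequality
  have S2 : (∑ i, ∑ k ∈ Finset.Icc 1 n, qK α t n k * (v k i) ^ 2)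
      + (∫ s in (t (n - 1))..(t n), omegaK α s) * ∑ i, (v n i) ^ 2
      ≤ (∑ i, ∑ k ∈ Finset.Icc 1 (n - 1), qK α t (n - 1) k * (v k i) ^ 2)
        + 2 * ∑ i, (u n i - u (n - 1) i) * v n i := by
    rw [Finset.mul_sum, ← Finset.sum_add_distrib, Finset.mul_sum, ← Finset.sum_add_distrib]
    exact Finset.sum_le_sum fun i _ => kern i
  have h2n : (0:ℝ) ≤ h ^ 2 := sq_nonneg h
  have M1 := mul_le_mul_of_nonneg_left S1 h2n
  have M2 := mul_le_mul_of_nonneg_left S2 (by positivity : (0:ℝ) ≤ h ^ 2 / 2)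
  have M3 : h ^ 2 * (∑ i, (u n i - u (n - 1) i) * Hfun (u n i) (u (n - 1) i))
      = h ^ 2 * (ε ^ 2 * (∑ i, (u n i - u (n - 1) i)
          * D.mulVec (fun j => (u n j + u (n - 1) j) / 2) i)
        - ∑ i, (u n i - u (n - 1) i) * v n i) := by rw [S3]
  have M4 : ε ^ 2 / 2 * h ^ 2 * (u n ⬝ᵥ D.mulVec (u n))
      - ε ^ 2 / 2 * h ^ 2 * (u (n - 1) ⬝ᵥ D.mulVec (u (n - 1)))
      = ε ^ 2 / 2 * h ^ 2 * (2 * ∑ i, (u n i - u (n - 1) i)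
          * D.mulVec (fun j => (u n j + u (n - 1) j) / 2) i) := by
    rw [← mul_sub, hDm]
  linarith
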